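/- Let a, b > 0 and R > 0, and consider the second-stage problem: minimize P₁ + P₂ over P₁, P₂ ≥ 0 subject to log(1 + e^{−R} a P₁) + log(1 + b P₂) ≥ R. If e^{−2R} ≤ b/a < 1, then the hybrid NOMA point P₁ = e^R/√(ab) − e^R/a, P₂ = e^R/√(ab) − 1/b is feasible (both coordinates are nonnegative and the rate constraint holds with equality) and is a global minimizer; the optimal value is 2e^R/√(ab) − e^R/a − 1/b. -/

import Mathlib

lemma amgm_aux {x y c : ℝ} (hx : 0 < x) (hy : 0 < y) (hc : 0 ≤ c)
    (h : c ^ 2 ≤ x * y) : 2 * c ≤ x + y := by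
  nlinarith [sq_nonneg (x - y), sq_nonneg (x + y - 2 * c), mul_pos hx hy]

/-- Feasibility for the second-stage problem (user 2's power minimization after user 1
transmits at its OMA power). -/
noncomputable def FeasStage2 (a b R p1 p2 : ℝ) : Prop :=
  0 ≤ p1 ∧ 0 ≤ p2 ∧
  R ≤ Real.log (1 + Real.exp (-R) * a * p1) + Real.log (1 + b * p2)

set_option maxHeartbeats 1000000 in
/-- If `e^{-2R} ≤ b/a < 1`, the hybrid NOMA point
`P₁ = e^R/√(ab) - e^R/a`, `P₂ = e^R/√(ab) - 1/b` is feasible (both coordinates nonnegative,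
rate constraint with equality) and is a global minimizer of the second-stage problem;
the optimal value is `2e^R/√(ab) - e^R/a - 1/b`. -/
theorem stmt_6 (a b R : ℝ) (ha : 0 < a) (hb : 0 < b) (hR : 0 < R)
    (hlb : Real.exp (-(2 * R)) ≤ b / a) (hub : b / a < 1) :
    0 ≤ Real.exp R / Real.sqrt (a * b) - Real.exp R / a ∧
    0 ≤ Real.exp R / Real.sqrt (a * b) - 1 / b ∧
    Real.log (1 + Real.exp (-R) * a * (Real.exp R / Real.sqrt (a * b) - Real.exp R / a)) +
      Real.log (1 + b * (Real.exp R / Real.sqrt (a * b) - 1 / b)) = R ∧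
    (∀ p1 p2, FeasStage2 a b R p1 p2 →
      2 * Real.exp R / Real.sqrt (a * b) - Real.exp R / a - 1 / b ≤ p1 + p2) := by
  have hE : 0 < Real.exp R := Real.exp_pos R
  set E := Real.exp R with hEdef
  have hab : (0:ℝ) < a * b := mul_pos ha hb
  have hs : 0 < Real.sqrt (a * b) := Real.sqrt_pos.mpr hab
  set s := Real.sqrt (a * b) with hsdef
  have hs2 : s ^ 2 = a * b := Real.sq_sqrt hab.le
  have hinv : Real.exp (-R) = E⁻¹ := Real.exp_neg R
  -- b < a
  have hba : b < a := (div_lt_one ha).mp hub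
  have hsa : s ≤ a := by
    calc s ≤ Real.sqrt (a * a) := Real.sqrt_le_sqrt (by nlinarith)
    _ = a := Real.sqrt_mul_self ha.le
  -- s ≤ b * E
  have hsbE : s ≤ b * E := by
    have hx : Real.exp (-(2 * R)) * a ≤ b := (le_div_iff₀ ha).mp hlb
    have hid : Real.exp (-(2 * R)) * E ^ 2 = 1 := by
      rw [hEdef, sq, ← Real.exp_add, ← Real.exp_add]
      · exact Real.exp_zero ▸ congrArg Real.exp (by ring)

    have h1 : a ≤ b * E ^ 2 := by
      nlinarith [mul_le_mul_of_nonneg_right hx (le_of_lt (by positivity : (0:ℝ) < E ^ 2))]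
    have : s ≤ Real.sqrt ((b * E) * (b * E)) := Real.sqrt_le_sqrt (by nlinarith)
    rwa [Real.sqrt_mul_self (by positivity)] at this
  have hp1 : 0 ≤ E / s - E / a := by
    have : E / a ≤ E / s := by gcongr
    linarith
  have hp2 : 0 ≤ E / s - 1 / b := by
    have : 1 / b ≤ E / s := by
      rw [div_le_div_iff₀ hb hs]
      nlinarith
    linarith
  refine ⟨hp1, hp2, ?_, ?_⟩
  · have e1 : 1 + Real.exp (-R) * a * (E / s - E / a) = a / s := by
      rw [hinv]; field_simp; ring
    have e2 : 1 + b * (E / s - 1 / b) = b * E / s := by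
      field_simp; ring
    rw [e1, e2, ← Real.log_mul (by positivity) (by positivity)]
    have hss : s * s = a * b := by nlinarith [hs2]
    have : a / s * (b * E / s) = E := by
      rw [div_mul_div_comm, hss, mul_comm a (b * E)]
      field_simp
    rw [this, hEdef, Real.log_exp]
  · rintro p1 p2 ⟨h1, h2, h3⟩
    set A := 1 + Real.exp (-R) * a * p1 with hAdef
    set B := 1 + b * p2 with hBdef
    clear_value A B
    have hA : 1 ≤ A := by
      have : 0 ≤ Real.exp (-R) * a * p1 := by positivity
      linarith
    have hB : 1 ≤ B := by nlinarith
    have hA0 : 0 < A := by linarith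
    have hB0 : 0 < B := by linarith
    have hprod : E ≤ A * B := by
      have := Real.exp_le_exp.mpr h3
      rwa [Real.exp_add, Real.exp_log hA0, Real.exp_log hB0] at this
    have h4 : a * p1 = (A - 1) * E := by
      rw [hAdef, hinv]; field_simp; ring
    have h5 : b * p2 = B - 1 := by rw [hBdef]; ring
    have hXY : (E * s) ^ 2 ≤ (E * A * b) * (B * a) := by
      nlinarith [mul_le_mul_of_nonneg_left hprod (by positivity : (0:ℝ) ≤ E * (a * b))]
    have key : 2 * (E * s) ≤ E * A * b + B * a :=
      amgm_aux (by positivity) (by positivity) (by positivity) hXY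
    have h6 : 2 * E / s ≤ (E * A * b + B * a) / (a * b) := by
      rw [div_le_div_iff₀ hs hab]
      calc 2 * E * (a * b) = 2 * E * s * s := by nlinarith [hs2]
        _ ≤ (E * A * b + B * a) * s := by nlinarith [hs]
    have h7 : (E * A * b + B * a) / (a * b) = p1 + p2 + E / a + 1 / b := by
      field_simp
      linear_combination (-1 : ℝ) * b * h4 + (-1 : ℝ) * a * h5
    rw [h7] at h6
    linarith
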